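/- For u, v, w in H²(𝕋) with w ∈ H¹(𝕋), and τ > 0, I(u,v,w) := |⟨u, vw − e^{τ∂ₓ³}[(e^{−τ∂ₓ³}v)(e^{−τ∂ₓ³}w)]⟩| ≤ c·τ·‖∂ₓu‖_{L²}·min(‖∂ₓ²v‖_{L²}‖∂ₓw‖_{L²}, ‖∂ₓ²w‖_{L²}‖∂ₓv‖_{L²}). -/

import Mathlib

/-- The Airy group `e^{t∂ₓ³}` acting on Fourier coefficients by `f̂ₖ ↦ e^{-itk³} f̂ₖ`. -/
noncomputable def airy (t : ℝ) (f : ℤ → ℂ) : ℤ → ℂ :=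
  fun k => Complex.exp (-Complex.I * (t : ℂ) * (k : ℂ) ^ 3) * f k

/-- Fourier coefficients of the pointwise product: convolution of coefficients. -/
noncomputable def fconv (f g : ℤ → ℂ) : ℤ → ℂ := fun k => ∑' j : ℤ, f j * g (k - j)

/-- The derivative `∂ₓ` as the Fourier multiplier `ik`. -/
def dx (f : ℤ → ℂ) : ℤ → ℂ := fun k => Complex.I * (k : ℂ) * f k

/-- The real `L²(𝕋)` pairing `⟨f,g⟩ = ∫ fg`, in terms of Fourier coefficients. -/
noncomputable def pairing (f g : ℤ → ℂ) : ℂ := ∑' k : ℤ, f k * g (-k)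

/-- The `L²(𝕋)` norm in terms of Fourier coefficients. -/
noncomputable def l2norm (f : ℤ → ℂ) : ℝ := Real.sqrt (∑' k : ℤ, ‖f k‖ ^ 2)

/-- Membership in the Sobolev space `Hʳ(𝕋)`, in terms of Fourier coefficients. -/
def memH (r : ℝ) (f : ℤ → ℂ) : Prop :=
  Summable (fun k : ℤ => (1 + (k : ℝ) ^ 2) ^ r * ‖f k‖ ^ 2)

/-! ### Auxiliary lemmas -/

/-- `|1 - e^{ix}| ≤ |x|` for real `x`. -/
lemma norm_one_sub_expI (x : ℝ) : ‖1 - Complex.exp (Complex.I * x)‖ ≤ |x| := by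
  have h : Complex.exp (Complex.I * x) = Complex.ofReal (Real.cos x) +
      Complex.ofReal (Real.sin x) * Complex.I := by
    rw [mul_comm, Complex.exp_mul_I]
    simp [Complex.cos_ofReal_re, Complex.sin_ofReal_re, Complex.ofReal_cos, Complex.ofReal_sin]
  rw [h]
  have hre : ((1 : ℂ) - (Complex.ofReal (Real.cos x) + Complex.ofReal (Real.sin x) * Complex.I)).re
      = 1 - Real.cos x := by simp [Complex.cos_ofReal_re]
  have him : ((1 : ℂ) - (Complex.ofReal (Real.cos x) + Complex.ofReal (Real.sin x) * Complex.I)).im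
      = - Real.sin x := by simp [Complex.sin_ofReal_re]
  rw [Complex.norm_def, Complex.normSq_apply, hre, him]
  have key : (1 - Real.cos x) ^ 2 + Real.sin x ^ 2 = (2 * Real.sin (x/2)) ^ 2 := by
    have h1 := Real.sin_sq_add_cos_sq x
    have h2 := Real.cos_two_mul (x/2)
    have h3 : Real.cos (2 * (x/2)) = Real.cos x := by ring_nf
    have h4 := Real.sin_sq_add_cos_sq (x/2)
    nlinarith [h1, h2, h3, h4]
  have : (1 - Real.cos x) * (1 - Real.cos x) + -Real.sin x * -Real.sin x
      = (2 * Real.sin (x/2)) ^ 2 := by nlinarith [key]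
  rw [this, Real.sqrt_sq_eq_abs]
  have := Real.abs_sin_le_abs (x := x/2)
  rw [abs_mul]
  simp only [abs_two]
  calc 2 * |Real.sin (x/2)| ≤ 2 * |x/2| := by linarith
    _ = |x| := by rw [abs_div]; simp; ring

/-- Summability of a product of two square-summable nonneg sequences. -/
lemma summable_mul_of_sq {ι : Type*} {f g : ι → ℝ} (hf0 : ∀ i, 0 ≤ f i) (hg0 : ∀ i, 0 ≤ g i)
    (hf : Summable fun i => f i ^ 2) (hg : Summable fun i => g i ^ 2) :
    Summable fun i => f i * g i := by
  refine Summable.of_nonneg_of_le (fun i => mul_nonneg (hf0 i) (hg0 i))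
    (fun i => ?_) ((hf.add hg).mul_left (1/2 : ℝ))
  have := sq_nonneg (f i - g i)
  nlinarith [this]

/-- Cauchy–Schwarz for tsums. -/
lemma tsum_mul_le_sqrt {ι : Type*} {f g : ι → ℝ} (hf0 : ∀ i, 0 ≤ f i) (hg0 : ∀ i, 0 ≤ g i)
    (hf : Summable fun i => f i ^ 2) (hg : Summable fun i => g i ^ 2) :
    ∑' i, f i * g i ≤ Real.sqrt (∑' i, f i ^ 2) * Real.sqrt (∑' i, g i ^ 2) := by
  refine Summable.tsum_le_of_sum_le (summable_mul_of_sq hf0 hg0 hf hg) (fun s => ?_)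
  calc ∑ i ∈ s, f i * g i
      ≤ Real.sqrt (∑ i ∈ s, f i ^ 2) * Real.sqrt (∑ i ∈ s, g i ^ 2) :=
        Real.sum_mul_le_sqrt_mul_sqrt s f g
    _ ≤ Real.sqrt (∑' i, f i ^ 2) * Real.sqrt (∑' i, g i ^ 2) := by
        apply mul_le_mul (Real.sqrt_le_sqrt (Summable.sum_le_tsum s (fun i _ => sq_nonneg _) hf))
          (Real.sqrt_le_sqrt (Summable.sum_le_tsum s (fun i _ => sq_nonneg _) hg))
          (Real.sqrt_nonneg _) (Real.sqrt_nonneg _)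

lemma memH_unpack {r : ℝ} {f : ℤ → ℂ} (h : memH r f) (n : ℕ) (hn : (n : ℝ) = r) :
    Summable (fun k : ℤ => (1 + (k : ℝ) ^ 2) ^ n * ‖f k‖ ^ 2) := by
  refine h.congr (fun k => ?_)
  rw [← hn, Real.rpow_natCast]

lemma sq_summable_of_memH_one {w : ℤ → ℂ} (h : memH 1 w) :
    Summable fun k : ℤ => (|(k:ℝ)| * ‖w k‖) ^ 2 := by
  have h1 := memH_unpack h 1 (by norm_num)
  refine Summable.of_nonneg_of_le (fun k => sq_nonneg _) (fun k => ?_) h1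
  have hk : (|(k:ℝ)| * ‖w k‖)^2 = (k:ℝ)^2 * ‖w k‖^2 := by
    rw [mul_pow, sq_abs]
  rw [hk, pow_one]
  have : ((k:ℝ)^2) ≤ 1 + (k:ℝ)^2 := by linarith
  exact mul_le_mul_of_nonneg_right this (sq_nonneg _)

lemma sq_summable_of_memH_two {w : ℤ → ℂ} (h : memH 2 w) :
    Summable fun k : ℤ => (|(k:ℝ)| * ‖w k‖) ^ 2 := by
  have h1 := memH_unpack h 2 (by norm_num)
  refine Summable.of_nonneg_of_le (fun k => sq_nonneg _) (fun k => ?_) h1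
  have hk : (|(k:ℝ)| * ‖w k‖)^2 = (k:ℝ)^2 * ‖w k‖^2 := by rw [mul_pow, sq_abs]
  rw [hk]
  refine mul_le_mul_of_nonneg_right ?_ (sq_nonneg _)
  nlinarith [sq_nonneg ((k:ℝ)^2), sq_nonneg (1 + (k:ℝ)^2), sq_nonneg (k:ℝ)]

lemma sq2_summable_of_memH_two {v : ℤ → ℂ} (h : memH 2 v) :
    Summable fun j : ℤ => ((j:ℝ)^2 * ‖v j‖) ^ 2 := by
  have h1 := memH_unpack h 2 (by norm_num)
  refine Summable.of_nonneg_of_le (fun k => sq_nonneg _) (fun k => ?_) h1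
  have hk : ((k:ℝ)^2 * ‖v k‖)^2 = ((k:ℝ)^2)^2 * ‖v k‖^2 := by rw [mul_pow]
  rw [hk]
  refine mul_le_mul_of_nonneg_right ?_ (sq_nonneg _)
  nlinarith [sq_nonneg (k:ℝ)]

lemma memH_one_of_two {v : ℤ → ℂ} (h : memH 2 v) : memH 1 v := by
  refine Summable.of_nonneg_of_le (fun k => ?_) (fun k => ?_) h
  · apply mul_nonneg _ (sq_nonneg _)
    positivity
  · refine mul_le_mul_of_nonneg_right ?_ (sq_nonneg _)
    apply Real.rpow_le_rpow_of_exponent_le (by nlinarith [sq_nonneg (k:ℝ)]) one_le_two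

lemma summable_inv_abs_sq : Summable fun j : ℤ => ((1:ℝ)/|(j:ℝ)|) ^ 2 := by
  have := (Real.summable_one_div_int_pow (p := 2)).mpr (by norm_num)
  refine this.congr (fun j => ?_)
  rw [div_pow, one_pow, sq_abs]

lemma norm_dx (f : ℤ → ℂ) (k : ℤ) : ‖dx f k‖ = |(k:ℝ)| * ‖f k‖ := by
  simp [dx, norm_mul]

lemma fconv_comm (f g : ℤ → ℂ) : fconv f g = fconv g f := by
  funext k
  unfold fconv
  rw [← (Equiv.subLeft k).tsum_eq (fun j => f j * g (k - j))]
  refine tsum_congr fun j => ?_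
  simp only [Equiv.subLeft_apply]
  rw [show k - (k - j) = j by ring, mul_comm]

/-- the resonance phase `3τ·k·j·(-k-j)`. -/
def phs (τ : ℝ) (k j : ℤ) : ℝ := τ * (3 * (k:ℝ) * (j:ℝ) * (-(k:ℝ) - (j:ℝ)))

lemma norm_expI (r : ℝ) : ‖Complex.exp (Complex.I * r)‖ = 1 := by
  rw [mul_comm, Complex.norm_exp_ofReal_mul_I]

lemma phase_eq (τ : ℝ) (k j : ℤ) :
    (-Complex.I * ((τ:ℝ):ℂ) * ((-k : ℤ):ℂ)^3) + ((-Complex.I * ((-τ:ℝ):ℂ) * ((j : ℤ):ℂ)^3) +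
      (-Complex.I * ((-τ:ℝ):ℂ) * ((-k - j : ℤ):ℂ)^3)) = Complex.I * ((phs τ k j : ℝ):ℂ) := by
  unfold phs; push_cast; ring

lemma abs_phs (τ : ℝ) (hτ : 0 < τ) (k j : ℤ) :
    |phs τ k j| = 3 * τ * (|(k:ℝ)| * (|(j:ℝ)| * |((-k - j : ℤ):ℝ)|)) := by
  have hc : ((-k - j : ℤ):ℝ) = -(k:ℝ) - (j:ℝ) := by push_cast; ring
  unfold phs
  rw [hc, abs_mul, abs_of_pos hτ, abs_mul, abs_mul, abs_mul,
    show |(3:ℝ)| = 3 from abs_of_pos (by norm_num)]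
  ring

set_option maxHeartbeats 1000000 in
lemma key (S τ : ℝ) (hS : S = Real.sqrt (∑' j : ℤ, ((1:ℝ)/|(j:ℝ)|)^2)) (hτ : 0 < τ)
    (u v w : ℤ → ℂ) (hu : memH 2 u) (hv : memH 2 v) (hw1 : memH 1 w) :
    ‖pairing u (fun k => fconv v w k - airy τ (fconv (airy (-τ) v) (airy (-τ) w)) k)‖ ≤
      3 * S * τ * l2norm (dx u) * (l2norm (dx (dx v)) * l2norm (dx w)) := by
  -- summability of the weighted sequences
  have hx2 : Summable fun k : ℤ => (|(k:ℝ)| * ‖u k‖) ^ 2 := sq_summable_of_memH_two hu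
  have hz2 : Summable fun k : ℤ => (|(k:ℝ)| * ‖w k‖) ^ 2 := sq_summable_of_memH_one hw1
  have hq2 : Summable fun j : ℤ => ((j:ℝ)^2 * ‖v j‖) ^ 2 := sq2_summable_of_memH_two hv
  have hyq : ∀ j : ℤ, |(j:ℝ)| * ‖v j‖ = (1/|(j:ℝ)|) * ((j:ℝ)^2 * ‖v j‖) := by
    intro j
    rcases eq_or_ne j 0 with rfl | hj
    · simp
    · have hj' : |(j:ℝ)| ≠ 0 := by
        simp only [ne_eq, abs_eq_zero, Int.cast_eq_zero]; exact_mod_cast hj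
      field_simp
      rw [sq_abs]
      ring
  have hy1 : Summable fun j : ℤ => |(j:ℝ)| * ‖v j‖ := by
    refine (summable_mul_of_sq (fun j => by positivity) (fun j => by positivity)
      summable_inv_abs_sq hq2).congr (fun j => (hyq j).symm)
  -- the ℓ¹ bound for |j|·‖v j‖
  set Q : ℝ := Real.sqrt (∑' j : ℤ, ((j:ℝ)^2 * ‖v j‖) ^ 2) with hQ
  have hY : ∑' j : ℤ, |(j:ℝ)| * ‖v j‖ ≤ S * Q := by
    rw [hS, hQ]
    calc ∑' j : ℤ, |(j:ℝ)| * ‖v j‖ = ∑' j : ℤ, (1/|(j:ℝ)|) * ((j:ℝ)^2 * ‖v j‖) :=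
          tsum_congr hyq
      _ ≤ _ := tsum_mul_le_sqrt (fun j => by positivity) (fun j => by positivity)
          summable_inv_abs_sq hq2
  -- bounds for w
  set Mz : ℝ := Real.sqrt (∑' k : ℤ, (|(k:ℝ)| * ‖w k‖) ^ 2) with hMz
  have hzM : ∀ m : ℤ, |(m:ℝ)| * ‖w m‖ ≤ Mz := by
    intro m
    rw [hMz, show |(m:ℝ)| * ‖w m‖ = Real.sqrt ((|(m:ℝ)| * ‖w m‖)^2) from
      (Real.sqrt_sq (by positivity)).symm]
    exact Real.sqrt_le_sqrt (Summable.le_tsum hz2 m (fun j _ => sq_nonneg _))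
  have hwsq : Summable fun m : ℤ => ‖w m‖ ^ 2 := by
    refine Summable.of_nonneg_of_le (fun m => sq_nonneg _) (fun m => ?_) (memH_unpack hw1 1 (by norm_num))
    rw [pow_one]
    nlinarith [sq_nonneg (m:ℝ), norm_nonneg (w m), sq_nonneg ‖w m‖]
  set Mw : ℝ := Real.sqrt (∑' m : ℤ, ‖w m‖ ^ 2) with hMw
  have hwM : ∀ m : ℤ, ‖w m‖ ≤ Mw := by
    intro m
    rw [hMw, show ‖w m‖ = Real.sqrt (‖w m‖^2) from (Real.sqrt_sq (norm_nonneg _)).symm]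
    exact Real.sqrt_le_sqrt (Summable.le_tsum hwsq m (fun j _ => sq_nonneg _))
  -- ℓ¹ bound for v itself
  have hv_l1 : Summable fun j : ℤ => ‖v j‖ := by
    have hind : Summable (fun j : ℤ => if j = 0 then ‖v 0‖ else 0) := by
      apply summable_of_ne_finset_zero (s := {(0:ℤ)})
      intro b hb
      simp only [Finset.mem_singleton] at hb
      simp [hb]
    refine Summable.of_nonneg_of_le (fun j => norm_nonneg _) (fun j => ?_) (hy1.add hind)
    rcases eq_or_ne j 0 with rfl | hj
    · simp
    · have h1 : (1:ℝ) ≤ |(j:ℝ)| := by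
        have := Int.one_le_abs hj
        calc (1:ℝ) = ((1:ℤ):ℝ) := by norm_num
          _ ≤ ((|j|:ℤ):ℝ) := by exact_mod_cast this
          _ = |(j:ℝ)| := by push_cast; ring
      simp only [if_neg hj, add_zero]
      nlinarith [norm_nonneg (v j)]
  -- expansion of the commutator
  have hFk : ∀ k : ℤ,
      fconv v w (-k) - airy τ (fconv (airy (-τ) v) (airy (-τ) w)) (-k)
        = ∑' j : ℤ, (v j * w (-k - j)) * (1 - Complex.exp (Complex.I * ((phs τ k j : ℝ):ℂ))) := by
    intro k
    have hs1 : Summable fun j : ℤ => v j * w (-k - j) := by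
      apply Summable.of_norm
      refine Summable.of_nonneg_of_le (fun j => norm_nonneg _) (fun j => ?_) (hv_l1.mul_right Mw)
      rw [norm_mul]
      exact mul_le_mul_of_nonneg_left (hwM _) (norm_nonneg _)
    have hs2 : Summable fun j : ℤ =>
        (v j * w (-k - j)) * Complex.exp (Complex.I * ((phs τ k j : ℝ):ℂ)) := by
      apply Summable.of_norm
      refine Summable.of_nonneg_of_le (fun j => norm_nonneg _) (fun j => ?_) (hv_l1.mul_right Mw)
      rw [norm_mul, norm_mul, norm_expI, mul_one]
      exact mul_le_mul_of_nonneg_left (hwM _) (norm_nonneg _)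
    have hairy : airy τ (fconv (airy (-τ) v) (airy (-τ) w)) (-k)
        = ∑' j : ℤ, (v j * w (-k - j)) * Complex.exp (Complex.I * ((phs τ k j : ℝ):ℂ)) := by
      simp only [airy, fconv]
      rw [← tsum_mul_left]
      refine tsum_congr fun j => ?_
      rw [← phase_eq τ k j, Complex.exp_add, Complex.exp_add]
      push_cast
      ring
    rw [hairy]
    simp only [fconv]
    rw [← Summable.tsum_sub hs1 hs2]
    exact tsum_congr fun j => by ring
  -- pointwise estimate
  have hterm : ∀ k j : ℤ,
      ‖(v j * w (-k - j)) * (1 - Complex.exp (Complex.I * ((phs τ k j : ℝ):ℂ)))‖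
        ≤ 3 * τ * (|(k:ℝ)| * ((|(j:ℝ)| * ‖v j‖) * (|((-k - j : ℤ):ℝ)| * ‖w (-k - j)‖))) := by
    intro k j
    rw [norm_mul, norm_mul]
    calc ‖v j‖ * ‖w (-k - j)‖ * ‖1 - Complex.exp (Complex.I * ((phs τ k j : ℝ):ℂ))‖
        ≤ ‖v j‖ * ‖w (-k - j)‖ * |phs τ k j| := by
          exact mul_le_mul_of_nonneg_left (norm_one_sub_expI _) (by positivity)
      _ = 3 * τ * (|(k:ℝ)| * ((|(j:ℝ)| * ‖v j‖) * (|((-k - j : ℤ):ℝ)| * ‖w (-k - j)‖))) := by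
          rw [abs_phs τ hτ k j]; ring
  -- shifted summability for w
  have hfun : ∀ jj : ℤ, (fun k : ℤ => (|((-k - jj : ℤ):ℝ)| * ‖w (-k - jj)‖) ^ 2)
      = (fun m : ℤ => (|(m:ℝ)| * ‖w m‖) ^ 2) ∘ (Equiv.subLeft (-jj)) := by
    intro jj
    funext k
    have h' : (-k - jj : ℤ) = -jj - k := by ring
    simp [Function.comp, Equiv.subLeft_apply, h']
  have hzsh : ∀ jj : ℤ, Summable fun k : ℤ => (|((-k - jj : ℤ):ℝ)| * ‖w (-k - jj)‖) ^ 2 := by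
    intro jj
    rw [hfun jj, (Equiv.subLeft (-jj)).summable_iff]
    exact hz2
  have hzsh_tsum : ∀ jj : ℤ, (∑' k : ℤ, (|((-k - jj : ℤ):ℝ)| * ‖w (-k - jj)‖) ^ 2)
      = ∑' m : ℤ, (|(m:ℝ)| * ‖w m‖) ^ 2 := by
    intro jj
    rw [hfun jj]
    exact (Equiv.subLeft (-jj)).tsum_eq (fun m : ℤ => (|(m:ℝ)| * ‖w m‖) ^ 2)
  set X : ℝ := Real.sqrt (∑' k : ℤ, (|(k:ℝ)| * ‖u k‖) ^ 2) with hX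
  have hX0 : 0 ≤ X := hX ▸ Real.sqrt_nonneg _
  have hMz0 : 0 ≤ Mz := hMz ▸ Real.sqrt_nonneg _
  have hQ0 : 0 ≤ Q := hQ ▸ Real.sqrt_nonneg _
  have hrow : ∀ jj : ℤ, Summable fun k : ℤ =>
      (|(k:ℝ)| * ‖u k‖) * (|((-k - jj : ℤ):ℝ)| * ‖w (-k - jj)‖) :=
    fun jj => summable_mul_of_sq (fun k => by positivity) (fun k => by positivity) hx2 (hzsh jj)
  have hrow_bd : ∀ jj : ℤ, (∑' k : ℤ, (|(k:ℝ)| * ‖u k‖) * (|((-k - jj : ℤ):ℝ)| * ‖w (-k - jj)‖))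
      ≤ X * Mz := by
    intro jj
    have h := tsum_mul_le_sqrt (f := fun k : ℤ => |(k:ℝ)| * ‖u k‖)
      (g := fun k : ℤ => |((-k - jj : ℤ):ℝ)| * ‖w (-k - jj)‖)
      (fun k => by positivity) (fun k => by positivity) hx2 (hzsh jj)
    rwa [hzsh_tsum jj, ← hX, ← hMz] at h
  -- summability on the product space
  have hGnn : ∀ p : ℤ × ℤ, 0 ≤ (|(p.1:ℝ)| * ‖v p.1‖) *
      ((|(p.2:ℝ)| * ‖u p.2‖) * (|((-p.2 - p.1 : ℤ):ℝ)| * ‖w (-p.2 - p.1)‖)) :=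
    fun p => by positivity
  have hrowsum : Summable fun j : ℤ => ∑' k : ℤ, (|(j:ℝ)| * ‖v j‖) *
      ((|(k:ℝ)| * ‖u k‖) * (|((-k - j : ℤ):ℝ)| * ‖w (-k - j)‖)) := by
    refine Summable.of_nonneg_of_le (fun j => tsum_nonneg (fun k => by positivity)) (fun j => ?_)
      (hy1.mul_right (X * Mz))
    rw [tsum_mul_left]
    exact mul_le_mul_of_nonneg_left (hrow_bd j) (by positivity)
  have hG : Summable (fun p : ℤ × ℤ => (|(p.1:ℝ)| * ‖v p.1‖) *
      ((|(p.2:ℝ)| * ‖u p.2‖) * (|((-p.2 - p.1 : ℤ):ℝ)| * ‖w (-p.2 - p.1)‖))) := by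
    refine (summable_prod_of_nonneg (fun p => hGnn p)).mpr ⟨fun j => (hrow j).mul_left (|(j:ℝ)| * ‖v j‖), hrowsum⟩
  have hGswap := hG.prod_symm
  have hcol : Summable fun k : ℤ => ∑' j : ℤ, (|(j:ℝ)| * ‖v j‖) *
      ((|(k:ℝ)| * ‖u k‖) * (|((-k - j : ℤ):ℝ)| * ‖w (-k - j)‖)) :=
    ((summable_prod_of_nonneg (fun p => hGnn p.swap)).mp hGswap).2
  have hswap : (∑' k : ℤ, ∑' j : ℤ, (|(j:ℝ)| * ‖v j‖) *
        ((|(k:ℝ)| * ‖u k‖) * (|((-k - j : ℤ):ℝ)| * ‖w (-k - j)‖)))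
      = ∑' j : ℤ, ∑' k : ℤ, (|(j:ℝ)| * ‖v j‖) *
        ((|(k:ℝ)| * ‖u k‖) * (|((-k - j : ℤ):ℝ)| * ‖w (-k - j)‖)) :=
    Summable.tsum_comm' hG (fun j => (hrow j).mul_left (|(j:ℝ)| * ‖v j‖)) (fun k => hGswap.prod_factor k)
  -- l2norm identifications
  have hlX : l2norm (dx u) = X := by
    rw [hX]
    unfold l2norm
    congr 1
    exact tsum_congr fun k => by rw [norm_dx]
  have hlZ : l2norm (dx w) = Mz := by
    rw [hMz]
    unfold l2norm
    congr 1
    exact tsum_congr fun k => by rw [norm_dx]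
  have hlQ : l2norm (dx (dx v)) = Q := by
    rw [hQ]
    unfold l2norm
    congr 1
    refine tsum_congr fun k => ?_
    rw [norm_dx, norm_dx, ← mul_assoc, abs_mul_abs_self, ← pow_two]
  -- the per-k estimate
  have hFnorm : ∀ k : ℤ,
      ‖u k * (fconv v w (-k) - airy τ (fconv (airy (-τ) v) (airy (-τ) w)) (-k))‖
        ≤ 3 * τ * ∑' j : ℤ, (|(j:ℝ)| * ‖v j‖) *
          ((|(k:ℝ)| * ‖u k‖) * (|((-k - j : ℤ):ℝ)| * ‖w (-k - j)‖)) := by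
    intro k
    rw [norm_mul, hFk k]
    have hyz : Summable fun j : ℤ =>
        (|(j:ℝ)| * ‖v j‖) * (|((-k - j : ℤ):ℝ)| * ‖w (-k - j)‖) := by
      refine Summable.of_nonneg_of_le (fun j => by positivity) (fun j => ?_) (hy1.mul_right Mz)
      exact mul_le_mul_of_nonneg_left (hzM _) (by positivity)
    have hbd : Summable fun j : ℤ => 3 * τ *
        (|(k:ℝ)| * ((|(j:ℝ)| * ‖v j‖) * (|((-k - j : ℤ):ℝ)| * ‖w (-k - j)‖))) :=
      (hyz.mul_left (3 * τ * |(k:ℝ)|)).congr fun j => by ring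
    have hsn : Summable fun j : ℤ =>
        ‖(v j * w (-k - j)) * (1 - Complex.exp (Complex.I * ((phs τ k j : ℝ):ℂ)))‖ :=
      Summable.of_nonneg_of_le (fun j => norm_nonneg _) (hterm k) hbd
    have e1 : (∑' j : ℤ, 3 * τ * (|(k:ℝ)| * ((|(j:ℝ)| * ‖v j‖) *
          (|((-k - j : ℤ):ℝ)| * ‖w (-k - j)‖))))
        = (3 * τ * |(k:ℝ)|) * ∑' j : ℤ, (|(j:ℝ)| * ‖v j‖) *
          (|((-k - j : ℤ):ℝ)| * ‖w (-k - j)‖) := by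
      rw [← tsum_mul_left]
      exact tsum_congr fun j => by ring
    have e2 : (∑' j : ℤ, (|(j:ℝ)| * ‖v j‖) * ((|(k:ℝ)| * ‖u k‖) *
          (|((-k - j : ℤ):ℝ)| * ‖w (-k - j)‖)))
        = (|(k:ℝ)| * ‖u k‖) * ∑' j : ℤ, (|(j:ℝ)| * ‖v j‖) *
          (|((-k - j : ℤ):ℝ)| * ‖w (-k - j)‖) := by
      rw [← tsum_mul_left]
      exact tsum_congr fun j => by ring
    calc ‖u k‖ * ‖∑' j : ℤ, (v j * w (-k - j)) *
          (1 - Complex.exp (Complex.I * ((phs τ k j : ℝ):ℂ)))‖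
        ≤ ‖u k‖ * ∑' j : ℤ, ‖(v j * w (-k - j)) *
          (1 - Complex.exp (Complex.I * ((phs τ k j : ℝ):ℂ)))‖ :=
          mul_le_mul_of_nonneg_left (norm_tsum_le_tsum_norm hsn) (norm_nonneg _)
      _ ≤ ‖u k‖ * ∑' j : ℤ, 3 * τ * (|(k:ℝ)| * ((|(j:ℝ)| * ‖v j‖) *
          (|((-k - j : ℤ):ℝ)| * ‖w (-k - j)‖))) :=
          mul_le_mul_of_nonneg_left (Summable.tsum_le_tsum (hterm k) hsn hbd) (norm_nonneg _)
      _ = 3 * τ * ∑' j : ℤ, (|(j:ℝ)| * ‖v j‖) * ((|(k:ℝ)| * ‖u k‖) *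
          (|((-k - j : ℤ):ℝ)| * ‖w (-k - j)‖)) := by
          rw [e1, e2]
          ring
  have hsnk : Summable fun k : ℤ =>
      ‖u k * (fconv v w (-k) - airy τ (fconv (airy (-τ) v) (airy (-τ) w)) (-k))‖ :=
    Summable.of_nonneg_of_le (fun k => norm_nonneg _) hFnorm (hcol.mul_left (3 * τ))
  have hmain : ‖pairing u
        (fun k => fconv v w k - airy τ (fconv (airy (-τ) v) (airy (-τ) w)) k)‖
      ≤ 3 * τ * ((∑' j : ℤ, |(j:ℝ)| * ‖v j‖) * (X * Mz)) := by
    calc ‖pairing u (fun k => fconv v w k - airy τ (fconv (airy (-τ) v) (airy (-τ) w)) k)‖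
        = ‖∑' k : ℤ, u k * (fconv v w (-k) -
            airy τ (fconv (airy (-τ) v) (airy (-τ) w)) (-k))‖ := rfl
      _ ≤ ∑' k : ℤ, ‖u k * (fconv v w (-k) -
            airy τ (fconv (airy (-τ) v) (airy (-τ) w)) (-k))‖ := norm_tsum_le_tsum_norm hsnk
      _ ≤ ∑' k : ℤ, 3 * τ * ∑' j : ℤ, (|(j:ℝ)| * ‖v j‖) * ((|(k:ℝ)| * ‖u k‖) *
            (|((-k - j : ℤ):ℝ)| * ‖w (-k - j)‖)) :=
          Summable.tsum_le_tsum hFnorm hsnk (hcol.mul_left (3 * τ))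
      _ = 3 * τ * ∑' k : ℤ, ∑' j : ℤ, (|(j:ℝ)| * ‖v j‖) * ((|(k:ℝ)| * ‖u k‖) *
            (|((-k - j : ℤ):ℝ)| * ‖w (-k - j)‖)) := tsum_mul_left
      _ = 3 * τ * ∑' j : ℤ, ∑' k : ℤ, (|(j:ℝ)| * ‖v j‖) * ((|(k:ℝ)| * ‖u k‖) *
            (|((-k - j : ℤ):ℝ)| * ‖w (-k - j)‖)) := by rw [hswap]
      _ = 3 * τ * ∑' j : ℤ, (|(j:ℝ)| * ‖v j‖) * ∑' k : ℤ, ((|(k:ℝ)| * ‖u k‖) *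
            (|((-k - j : ℤ):ℝ)| * ‖w (-k - j)‖)) := by
          congr 1
          exact tsum_congr fun j => tsum_mul_left
      _ ≤ 3 * τ * ∑' j : ℤ, (|(j:ℝ)| * ‖v j‖) * (X * Mz) := by
          refine mul_le_mul_of_nonneg_left (Summable.tsum_le_tsum
            (fun j => mul_le_mul_of_nonneg_left (hrow_bd j) (by positivity))
            (hrowsum.congr (fun j => tsum_mul_left)) (hy1.mul_right (X * Mz)))
            (by positivity)
      _ = 3 * τ * ((∑' j : ℤ, |(j:ℝ)| * ‖v j‖) * (X * Mz)) := by rw [tsum_mul_right]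
  calc ‖pairing u (fun k => fconv v w k - airy τ (fconv (airy (-τ) v) (airy (-τ) w)) k)‖
      ≤ 3 * τ * ((∑' j : ℤ, |(j:ℝ)| * ‖v j‖) * (X * Mz)) := hmain
    _ ≤ 3 * τ * ((S * Q) * (X * Mz)) := by
        refine mul_le_mul_of_nonneg_left (mul_le_mul_of_nonneg_right hY
          (mul_nonneg hX0 hMz0)) (by positivity)
    _ = 3 * S * τ * X * (Q * Mz) := by ring
    _ = 3 * S * τ * l2norm (dx u) * (l2norm (dx (dx v)) * l2norm (dx w)) := by
        rw [hlX, hlQ, hlZ]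

/-- `H¹`-level commutator bound:
`I(u,v,w) ≤ c τ ‖∂ₓu‖ · min(‖∂ₓ²v‖‖∂ₓw‖, ‖∂ₓ²w‖‖∂ₓv‖)`. -/
theorem airy_commutator_H1 :
    ∃ c : ℝ, 0 < c ∧ ∀ (τ : ℝ), 0 < τ → ∀ u v w : ℤ → ℂ,
      memH 2 u → memH 2 v → memH 2 w → memH 1 w →
      ‖pairing u
          (fun k => fconv v w k - airy τ (fconv (airy (-τ) v) (airy (-τ) w)) k)‖ ≤
        c * τ * l2norm (dx u) *
          min (l2norm (dx (dx v)) * l2norm (dx w)) (l2norm (dx (dx w)) * l2norm (dx v)) := by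
  refine ⟨3 * Real.sqrt (∑' j : ℤ, ((1:ℝ)/|(j:ℝ)|)^2), ?_, ?_⟩
  · have hpos : 0 < ∑' j : ℤ, ((1:ℝ)/|(j:ℝ)|)^2 :=
      Summable.tsum_pos summable_inv_abs_sq (fun i => sq_nonneg _) 1 (by norm_num)
    have := Real.sqrt_pos.mpr hpos
    linarith
  · intro τ hτ u v w hu hv hw hw1
    have heq : (fun k => fconv v w k - airy τ (fconv (airy (-τ) v) (airy (-τ) w)) k)
        = (fun k => fconv w v k - airy τ (fconv (airy (-τ) w) (airy (-τ) v)) k) := by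
      funext k
      rw [fconv_comm v w, fconv_comm (airy (-τ) v) (airy (-τ) w)]
    have hb1 := key (Real.sqrt (∑' j : ℤ, ((1:ℝ)/|(j:ℝ)|)^2)) τ rfl hτ u v w hu hv hw1
    have hb2 := key (Real.sqrt (∑' j : ℤ, ((1:ℝ)/|(j:ℝ)|)^2)) τ rfl hτ u w v hu hw
      (memH_one_of_two hv)
    have hX0 : (0:ℝ) ≤ l2norm (dx u) := Real.sqrt_nonneg _
    have hc0 : (0:ℝ) ≤ 3 * Real.sqrt (∑' j : ℤ, ((1:ℝ)/|(j:ℝ)|)^2) * τ * l2norm (dx u) := by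
      have := Real.sqrt_nonneg (∑' j : ℤ, ((1:ℝ)/|(j:ℝ)|)^2)
      positivity
    rw [mul_min_of_nonneg _ _ hc0]
    refine le_min hb1 ?_
    rw [heq]
    exact hb2
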